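/- Let A be a complex Banach algebra and a, b ∈ A with ab = ba. If a and b both have generalized Hirano inverses, then ab has a generalized Hirano inverse and (ab)^h = a^h b^h. -/

import Mathlib

set_option linter.unusedSectionVars false

open Filter Topology Finset
open scoped NNReal ENNReal

/-- `a` is quasinilpotent: `1 + a*x` is a unit for every `x` commuting with `a`. -/
def IsQuasinilpotent {R : Type*} [Ring R] (a : R) : Prop :=
  ∀ x : R, x * a = a * x → IsUnit (1 + a * x)

/-- `x` lies in the double commutant of `a`. -/
def InDoubleCommutant {R : Type*} [Ring R] (a x : R) : Prop :=
  ∀ y : R, y * a = a * y → x * y = y * x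

/-- `b` is a generalized Hirano inverse of `a`. -/
def IsGHInverse {R : Type*} [Ring R] (a b : R) : Prop :=
  b * a * b = b ∧ InDoubleCommutant a b ∧ IsQuasinilpotent (a ^ 2 - a * b)

section Aux
variable {A : Type*} [NormedRing A] [NormedAlgebra ℂ A] [CompleteSpace A]



lemma spec_subset_of_sr0 {z : A} (h : spectralRadius ℂ z = 0) : spectrum ℂ z ⊆ {0} := by
  intro l hl
  have hle : (‖l‖₊ : ℝ≥0∞) ≤ spectralRadius ℂ z :=
    le_iSup₂ (f := fun k (_ : k ∈ spectrum ℂ z) => (‖k‖₊ : ℝ≥0∞)) l hl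
  rw [h, nonpos_iff_eq_zero] at hle
  have : ‖l‖₊ = 0 := by exact_mod_cast hle
  simpa using (nnnorm_eq_zero.mp this)

lemma sr0_of_spec_subset {z : A} (h : spectrum ℂ z ⊆ {0}) : spectralRadius ℂ z = 0 := by
  refine le_antisymm (iSup₂_le fun k hk => ?_) (zero_le)
  have := h hk
  simp_all

lemma gelfand_small {z : A} (h : spectralRadius ℂ z = 0) {ε : ℝ≥0} (hε : 0 < ε) :
    ∃ N : ℕ, ∀ n, N ≤ n → 1 ≤ n → ‖z ^ n‖₊ ≤ ε ^ n := by
  have hg := spectrum.pow_nnnorm_pow_one_div_tendsto_nhds_spectralRadius z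
  rw [h] at hg
  have hev : ∀ᶠ n : ℕ in atTop, (‖z ^ n‖₊ : ℝ≥0∞) ^ (1 / (n : ℝ)) < (ε : ℝ≥0∞) :=
    hg.eventually_lt_const (by exact_mod_cast hε)
  obtain ⟨N, hN⟩ := eventually_atTop.mp hev
  refine ⟨N, fun n hn hn1 => ?_⟩
  have hne : (n : ℝ) ≠ 0 := by positivity
  have h1 : ((‖z ^ n‖₊ : ℝ≥0∞) ^ (1 / (n : ℝ))) ^ (n : ℝ) ≤ (ε : ℝ≥0∞) ^ (n : ℝ) :=
    ENNReal.rpow_le_rpow (le_of_lt (hN n hn)) (by positivity)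
  rw [← ENNReal.rpow_mul, one_div, inv_mul_cancel₀ hne, ENNReal.rpow_one] at h1
  have h2 : (ε : ℝ≥0∞) ^ (n : ℝ) = ((ε ^ n : ℝ≥0) : ℝ≥0∞) := by
    rw [ENNReal.rpow_natCast, ENNReal.coe_pow]
  rw [h2] at h1
  exact_mod_cast h1

lemma sr0_of_forall {w : A}
    (h : ∀ ε : ℝ≥0, 0 < ε → ∀ N : ℕ, ∃ n, N ≤ n ∧ 1 ≤ n ∧ ‖w ^ n‖₊ ≤ ε ^ n) :
    spectralRadius ℂ w = 0 := by
  refine le_antisymm ?_ (zero_le)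
  have key : ∀ ε : ℝ≥0, 0 < ε → spectralRadius ℂ w ≤ (ε : ℝ≥0∞) := by
    intro ε hε
    refine (spectrum.spectralRadius_le_liminf_pow_nnnorm_pow_one_div ℂ w).trans ?_
    refine liminf_le_of_frequently_le' ?_
    rw [frequently_atTop]
    intro N
    obtain ⟨n, hn, hn1, hb⟩ := h ε hε N
    refine ⟨n, hn, ?_⟩
    have hne : (0:ℝ) ≤ 1 / (n:ℝ) := by positivity
    calc (‖w ^ n‖₊ : ℝ≥0∞) ^ (1 / (n:ℝ))
        ≤ ((ε ^ n : ℝ≥0) : ℝ≥0∞) ^ (1 / (n:ℝ)) := by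
          exact ENNReal.rpow_le_rpow (by exact_mod_cast hb) hne
      _ = (ε : ℝ≥0∞) := by
          rw [ENNReal.coe_pow, ← ENNReal.rpow_natCast, ← ENNReal.rpow_mul]
          rw [mul_one_div, div_self (by positivity : (n:ℝ) ≠ 0), ENNReal.rpow_one]
  refine ENNReal.le_of_forall_pos_le_add fun ε hε _ => ?_
  simpa using key ε hε

lemma sr0_mul {z x : A} (hz : spectralRadius ℂ z = 0) (hc : z * x = x * z) :
    spectralRadius ℂ (z * x) = 0 := by
  apply sr0_of_forall
  intro ε hε N
  have hx : (0:ℝ≥0) < ‖x‖₊ + 1 := by positivity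
  set δ : ℝ≥0 := ε / (‖x‖₊ + 1) with hδdef
  have hδ : 0 < δ := div_pos hε hx
  obtain ⟨M, hM⟩ := gelfand_small hz hδ
  refine ⟨max (max N M) 1, le_trans (le_max_left N M) (le_max_left _ 1), le_max_right _ 1, ?_⟩
  set n := max (max N M) 1 with hndef
  have hn1 : 1 ≤ n := le_max_right _ 1
  have hnM : M ≤ n := le_trans (le_max_right N M) (le_max_left _ 1)
  have hcom : Commute z x := hc
  calc ‖(z * x) ^ n‖₊ = ‖z ^ n * x ^ n‖₊ := by rw [hcom.mul_pow]
    _ ≤ ‖z ^ n‖₊ * ‖x ^ n‖₊ := nnnorm_mul_le _ _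
    _ ≤ δ ^ n * ‖x‖₊ ^ n := by
        refine mul_le_mul' (hM n hnM hn1) ?_
        exact nnnorm_pow_le' x (lt_of_lt_of_le one_pos hn1)
    _ ≤ δ ^ n * (‖x‖₊ + 1) ^ n := by
        gcongr
        exact le_self_add
    _ = (δ * (‖x‖₊ + 1)) ^ n := (mul_pow _ _ _).symm
    _ = ε ^ n := by rw [hδdef, div_mul_cancel₀ _ (ne_of_gt hx)]



lemma bound_all {z : A} (hz : spectralRadius ℂ z = 0) {δ : ℝ≥0} (hδ : 0 < δ) :
    ∃ C : ℝ≥0, 1 ≤ C ∧ ∀ k, ‖z ^ k‖₊ ≤ C * δ ^ k := by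
  obtain ⟨N, hN⟩ := gelfand_small hz hδ
  set S : ℝ≥0 := (Finset.range (N + 1)).sup fun k => ‖z ^ k‖₊ / δ ^ k with hS
  refine ⟨1 + S, le_add_right le_rfl, fun k => ?_⟩
  rcases le_or_gt k N with hk | hk
  · have hmem : k ∈ Finset.range (N + 1) := Finset.mem_range.mpr (by omega)
    have hle : ‖z ^ k‖₊ / δ ^ k ≤ S := Finset.le_sup (f := fun k => ‖z ^ k‖₊ / δ ^ k) hmem
    have hδk : (δ : ℝ≥0) ^ k ≠ 0 := by positivity
    calc ‖z ^ k‖₊ = ‖z ^ k‖₊ / δ ^ k * δ ^ k := by rw [div_mul_cancel₀ _ hδk]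
      _ ≤ S * δ ^ k := by gcongr
      _ ≤ (1 + S) * δ ^ k := by gcongr; exact le_add_self
  · have h1 : 1 ≤ k := by omega
    calc ‖z ^ k‖₊ ≤ δ ^ k := hN k (by omega) h1
      _ ≤ (1 + S) * δ ^ k := le_mul_of_one_le_left (zero_le) (le_add_right le_rfl)

lemma sr0_add {z w : A} (hz : spectralRadius ℂ z = 0) (hw : spectralRadius ℂ w = 0)
    (hc : z * w = w * z) : spectralRadius ℂ (z + w) = 0 := by
  apply sr0_of_forall
  intro ε hε N
  have hε4 : (0:ℝ≥0) < ε / 4 := div_pos hε (by norm_num)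
  obtain ⟨C, hC1, hC⟩ := bound_all hz hε4
  obtain ⟨D, hD1, hD⟩ := bound_all hw hε4
  obtain ⟨M, hM⟩ : ∃ M : ℕ, C * D < 2 ^ M := pow_unbounded_of_one_lt (C * D) one_lt_two
  refine ⟨max (max N M) 1, le_trans (le_max_left N M) (le_max_left _ 1), le_max_right _ 1, ?_⟩
  set n := max (max N M) 1 with hndef
  have hnM : M ≤ n := le_trans (le_max_right N M) (le_max_left _ 1)
  have hcom : Commute z w := hc
  have hexp := hcom.add_pow' n
  calc ‖(z + w) ^ n‖₊
      ≤ ∑ m ∈ Finset.HasAntidiagonal.antidiagonal n, ‖(n.choose m.1) • (z ^ m.1 * w ^ m.2)‖₊ := by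
        rw [hexp]; exact nnnorm_sum_le _ _
    _ ≤ ∑ m ∈ Finset.HasAntidiagonal.antidiagonal n, (n.choose m.1 : ℝ≥0) * (C * D * (ε/4) ^ n) := by
        refine Finset.sum_le_sum fun m hm => ?_
        have hmn : m.1 + m.2 = n := Finset.HasAntidiagonal.mem_antidiagonal.mp hm
        calc ‖(n.choose m.1) • (z ^ m.1 * w ^ m.2)‖₊
            ≤ (n.choose m.1 : ℝ≥0) * ‖z ^ m.1 * w ^ m.2‖₊ := nnnorm_nsmul_le
          _ ≤ (n.choose m.1 : ℝ≥0) * (‖z ^ m.1‖₊ * ‖w ^ m.2‖₊) := by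
              gcongr; exact nnnorm_mul_le _ _
          _ ≤ (n.choose m.1 : ℝ≥0) * ((C * (ε/4) ^ m.1) * (D * (ε/4) ^ m.2)) := by
              gcongr
              · exact hC m.1
              · exact hD m.2
          _ = (n.choose m.1 : ℝ≥0) * (C * D * (ε/4) ^ n) := by
              rw [← hmn, pow_add]; ring
    _ = (∑ m ∈ Finset.HasAntidiagonal.antidiagonal n, (n.choose m.1 : ℝ≥0)) * (C * D * (ε/4) ^ n) := by
        rw [Finset.sum_mul]
    _ = (2 ^ n : ℝ≥0) * (C * D * (ε/4) ^ n) := by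
        congr 1
        rw [Finset.Nat.sum_antidiagonal_eq_sum_range_succ_mk]
        norm_cast
        exact Nat.sum_range_choose n
    _ ≤ (2 ^ n : ℝ≥0) * (2 ^ n * (ε/4) ^ n) := by
        gcongr
        calc C * D ≤ 2 ^ M := le_of_lt hM
          _ ≤ 2 ^ n := pow_le_pow_right₀ one_le_two hnM
    _ = (2 * 2 * (ε/4)) ^ n := by rw [mul_pow, mul_pow]; ring
    _ = ε ^ n := by
        congr 1
        rw [show (2:ℝ≥0) * 2 = 4 from by norm_num, mul_comm]
        exact div_mul_cancel₀ ε (by norm_num)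

lemma eq_zero_of_sr0_bound {v : A} (hv : spectralRadius ℂ v = 0) (z : A) (C B : ℝ≥0)
    (h : ∀ m : ℕ, 1 ≤ m → ‖z‖₊ ≤ C * B ^ m * ‖v ^ m‖₊) : z = 0 := by
  have key : ∀ ε : ℝ≥0, 0 < ε → ‖z‖₊ ≤ ε := by
    intro ε hε
    have hB : (0:ℝ≥0) < 2 * (B + 1) := by positivity
    have hδ : (0:ℝ≥0) < (2 * (B + 1))⁻¹ := by positivity
    obtain ⟨N, hN⟩ := gelfand_small hv hδ
    obtain ⟨M, hM⟩ : ∃ M : ℕ, C < ε * 2 ^ M := by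
      obtain ⟨M, hM⟩ := pow_unbounded_of_one_lt (C / ε) one_lt_two
      exact ⟨M, by rwa [div_lt_iff₀ hε, mul_comm] at hM⟩
    set m := max (max N M) 1 with hmdef
    have hm1 : 1 ≤ m := le_max_right _ 1
    have hmN : N ≤ m := le_trans (le_max_left N M) (le_max_left _ 1)
    have hmM : M ≤ m := le_trans (le_max_right N M) (le_max_left _ 1)
    have hBδ : B * (2 * (B + 1))⁻¹ ≤ 2⁻¹ := by
      have h1 : B * (2 * (B + 1))⁻¹ = 2⁻¹ * (B / (B + 1)) := by
        rw [mul_inv, div_eq_mul_inv]; ring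
      rw [h1]
      refine mul_le_of_le_one_right (zero_le) ?_
      rw [div_le_one₀ (by positivity)]
      exact le_add_right le_rfl
    calc ‖z‖₊ ≤ C * B ^ m * ‖v ^ m‖₊ := h m hm1
      _ ≤ C * B ^ m * ((2 * (B + 1))⁻¹) ^ m := by gcongr; exact hN m hmN hm1
      _ = C * (B * (2 * (B + 1))⁻¹) ^ m := by rw [mul_pow, mul_assoc]
      _ ≤ C * (2⁻¹ : ℝ≥0) ^ m := by gcongr
      _ ≤ C * (2⁻¹ : ℝ≥0) ^ M := by
          refine mul_le_mul_right ?_ C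
          exact pow_le_pow_of_le_one (zero_le) (by norm_num) hmM
      _ ≤ (ε * 2 ^ M) * (2⁻¹ : ℝ≥0) ^ M := by gcongr
      _ = ε := by
          rw [mul_assoc, ← mul_pow]
          norm_num
  have h0 : ‖z‖₊ = 0 := by
    by_contra h0
    have hp : 0 < ‖z‖₊ := pos_iff_ne_zero.mpr h0
    have := key (‖z‖₊ / 2) (by positivity)
    exact absurd this (not_le.mpr (NNReal.half_lt_self h0))
  simpa using h0



lemma IsQuasinilpotent.sr0 {z : A} (h : IsQuasinilpotent z) : spectralRadius ℂ z = 0 := by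
  apply sr0_of_spec_subset
  intro l hl
  simp only [Set.mem_singleton_iff]
  by_contra hl0
  have hcomm : ((-l⁻¹) • (1:A)) * z = z * ((-l⁻¹) • (1:A)) := by
    rw [smul_mul_assoc, mul_smul_comm, one_mul, mul_one]
  have hu := h _ hcomm
  have he : 1 + z * ((-l⁻¹) • (1:A)) = l⁻¹ • (l • (1:A) - z) := by
    rw [mul_smul_comm, mul_one, smul_sub, smul_smul, inv_mul_cancel₀ hl0, one_smul, neg_smul,
      sub_eq_add_neg]
  rw [he] at hu
  have hu2 : IsUnit (l • (1:A) - z) := by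
    have := hu.smul (Units.mk0 l hl0)
    rwa [Units.smul_mk0, smul_smul, mul_inv_cancel₀ hl0, one_smul] at this
  have : l ∉ spectrum ℂ z := spectrum.notMem_iff.mpr (by rwa [Algebra.algebraMap_eq_smul_one])
  exact this hl

lemma isQuasinilpotent_of_sr0 {z : A} (h : spectralRadius ℂ z = 0) : IsQuasinilpotent z := by
  intro x hx
  have h2 : spectralRadius ℂ (z * x) = 0 := sr0_mul h hx.symm
  have h3 : (-1 : ℂ) ∉ spectrum ℂ (z * x) := by
    intro hm
    have := spec_subset_of_sr0 h2 hm
    simp at this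
  rw [spectrum.notMem_iff] at h3
  have he : (algebraMap ℂ A) (-1) - z * x = -(1 + z * x) := by
    rw [map_neg, map_one]
    abel
  rw [he, IsUnit.neg_iff] at h3
  exact h3



/-- powers of `e^2 * (1 - w)` for an idempotent `w` commuting with `e`. -/
lemma idem_shift_pow {e w : A} (hw : w * w = w) (hcw : w * e = e * w) :
    ∀ m : ℕ, (e ^ 2 * (1 - w)) ^ (m + 1) = e ^ (2 * (m + 1)) * (1 - w) := by
  have hce : Commute w e := hcw
  have hc2 : Commute (1 - w) (e ^ 2) := (Commute.one_left (e ^ 2)).sub_left (hce.pow_right 2)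
  have hidem : (1 - w) * (1 - w) = 1 - w := by
    rw [sub_mul, one_mul, mul_sub, mul_one, hw]; abel
  intro m
  induction m with
  | zero => norm_num
  | succ m ih =>
      calc (e ^ 2 * (1 - w)) ^ (m + 1 + 1)
          = (e ^ 2 * (1 - w)) ^ (m + 1) * (e ^ 2 * (1 - w)) := pow_succ _ _
        _ = e ^ (2 * (m + 1)) * (((1 - w) * e ^ 2) * (1 - w)) := by
            rw [ih, mul_assoc, ← mul_assoc (1 - w)]
        _ = e ^ (2 * (m + 1)) * (e ^ 2 * ((1 - w) * (1 - w))) := by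
            rw [hc2.eq, mul_assoc]
        _ = e ^ (2 * (m + 1 + 1)) * (1 - w) := by
            rw [hidem, ← mul_assoc, ← pow_add,
              show 2 * (m + 1) + 2 = 2 * (m + 1 + 1) from by ring]

lemma gh_unique {e d t : A}
    (hde : d * e = e * d) (hd : d * e * d = d) (hdq : spectralRadius ℂ (e ^ 2 - e * d) = 0)
    (hte : t * e = e * t) (ht : t * e * t = t) (htq : spectralRadius ℂ (e ^ 2 - e * t) = 0) :
    d = t := by
  have cde : Commute d e := hde
  have cte : Commute t e := hte
  have hp : (e * d) * (e * d) = e * d := by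
    rw [mul_assoc, ← mul_assoc d e d, hd]
  have hq : (e * t) * (e * t) = e * t := by
    rw [mul_assoc, ← mul_assoc t e t, ht]
  have hpe : (e * d) * e = e * (e * d) := by rw [mul_assoc, hde, ← mul_assoc]
  have hqe : (e * t) * e = e * (e * t) := by rw [mul_assoc, hte, ← mul_assoc]
  have hqt : (e * t) * t = t := by rw [← hte, ht]
  have hdp : d * (e * d) = d := by rw [← mul_assoc, hd]
  -- quasinilpotency of e^2 * (1 - e*s) for s = d, t
  have hVsr0 : ∀ s : A, (s * e = e * s) → (s * e * s = s) →
      spectralRadius ℂ (e ^ 2 - e * s) = 0 →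
      spectralRadius ℂ (e ^ 2 * (1 - e * s)) = 0 := by
    intro s hse hs hsq
    have cse : Commute s e := hse
    have hqs : (e * s) * (e * s) = e * s := by
      rw [mul_assoc, ← mul_assoc s e s, hs]
    have hfact : e ^ 2 * (1 - e * s) = (e ^ 2 - e * s) * (1 - e * s) := by
      simp only [mul_sub, sub_mul, mul_one, one_mul]
      rw [hqs]
      abel
    have c2 : Commute (e ^ 2) (e * s) := ((Commute.refl e).mul_right cse.symm).pow_left 2
    have ccomm : Commute (e ^ 2 - e * s) (1 - e * s) :=
      (Commute.one_right _).sub_right (c2.sub_left (Commute.refl _))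
    rw [hfact]
    exact sr0_mul hsq ccomm.eq
  -- first vanishing : (e*d) * (1 - e*t) = 0
  have habs : (d * e) * ((e * d) * (1 - e * t)) = (e * d) * (1 - e * t) := by
    rw [hde, ← mul_assoc, hp]
  have hiter : ∀ n : ℕ, (e * d) * (1 - e * t) = (d * e) ^ n * ((e * d) * (1 - e * t)) := by
    intro n
    induction n with
    | zero => rw [pow_zero, one_mul]
    | succ n ih =>
        calc (e * d) * (1 - e * t) = (d * e) ^ n * ((e * d) * (1 - e * t)) := ih
          _ = (d * e) ^ n * ((d * e) * ((e * d) * (1 - e * t))) := by rw [habs]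
          _ = ((d * e) ^ n * (d * e)) * ((e * d) * (1 - e * t)) := by rw [← mul_assoc]
          _ = (d * e) ^ (n + 1) * ((e * d) * (1 - e * t)) := by rw [pow_succ]
  have cpe : Commute (e * d) e := hpe
  have hz1 : (e * d) * (1 - e * t) = 0 := by
    refine eq_zero_of_sr0_bound (hVsr0 t hte ht htq) _ (‖e * d‖₊) (‖d‖₊ ^ 2) ?_
    intro m hm
    obtain ⟨k, rfl⟩ : ∃ k, m = k + 1 := ⟨m - 1, by omega⟩
    have heq : (e * d) * (1 - e * t)
        = d ^ (2 * (k + 1)) * ((e * d) * (e ^ 2 * (1 - e * t)) ^ (k + 1)) := by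
      calc (e * d) * (1 - e * t)
          = (d * e) ^ (2 * (k + 1)) * ((e * d) * (1 - e * t)) := hiter _
        _ = d ^ (2 * (k + 1)) * (e ^ (2 * (k + 1)) * ((e * d) * (1 - e * t))) := by
            rw [cde.mul_pow, mul_assoc]
        _ = d ^ (2 * (k + 1)) * ((e * d) * (e ^ (2 * (k + 1)) * (1 - e * t))) := by
            have hinner : e ^ (2 * (k + 1)) * ((e * d) * (1 - e * t))
                = (e * d) * (e ^ (2 * (k + 1)) * (1 - e * t)) := by
              rw [← mul_assoc, ← (cpe.pow_right (2 * (k + 1))).eq, mul_assoc]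
            rw [hinner]
        _ = d ^ (2 * (k + 1)) * ((e * d) * (e ^ 2 * (1 - e * t)) ^ (k + 1)) := by
            rw [idem_shift_pow hq hqe]
    rw [heq]
    calc ‖d ^ (2 * (k + 1)) * ((e * d) * (e ^ 2 * (1 - e * t)) ^ (k + 1))‖₊
        ≤ ‖d ^ (2 * (k + 1))‖₊ * (‖e * d‖₊ * ‖(e ^ 2 * (1 - e * t)) ^ (k + 1)‖₊) :=
          (nnnorm_mul_le _ _).trans (by gcongr; exact nnnorm_mul_le _ _)
      _ ≤ ‖d‖₊ ^ (2 * (k + 1)) * (‖e * d‖₊ * ‖(e ^ 2 * (1 - e * t)) ^ (k + 1)‖₊) := by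
          gcongr
          exact nnnorm_pow_le' d (by omega)
      _ = ‖e * d‖₊ * (‖d‖₊ ^ 2) ^ (k + 1) * ‖(e ^ 2 * (1 - e * t)) ^ (k + 1)‖₊ := by
          rw [pow_mul]; ring
  have hpq : e * d = (e * d) * (e * t) := by
    rwa [mul_sub, mul_one, sub_eq_zero] at hz1
  -- second vanishing : (1 - e*d) * (e*t) = 0
  have hqpow : ∀ n : ℕ, (e * t) ^ (n + 1) = e * t := by
    intro n
    induction n with
    | zero => rw [pow_one]
    | succ n ih => rw [pow_succ, ih, hq]
  have c1pe : Commute (1 - e * d) e := (Commute.one_left e).sub_left cpe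
  have hz2 : (1 - e * d) * (e * t) = 0 := by
    refine eq_zero_of_sr0_bound (hVsr0 d hde hd hdq) _ 1 (‖t‖₊ ^ 2) ?_
    intro m hm
    obtain ⟨k, rfl⟩ : ∃ k, m = k + 1 := ⟨m - 1, by omega⟩
    have heq : (1 - e * d) * (e * t)
        = (e ^ 2 * (1 - e * d)) ^ (k + 1) * t ^ (2 * (k + 1)) := by
      calc (1 - e * d) * (e * t)
          = (1 - e * d) * (e * t) ^ (2 * (k + 1)) := by
            rw [show 2 * (k + 1) = (2 * k + 1) + 1 from by ring, hqpow]
        _ = (1 - e * d) * (e ^ (2 * (k + 1)) * t ^ (2 * (k + 1))) := by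
            rw [cte.symm.mul_pow]
        _ = ((1 - e * d) * e ^ (2 * (k + 1))) * t ^ (2 * (k + 1)) := by
            rw [mul_assoc]
        _ = (e ^ (2 * (k + 1)) * (1 - e * d)) * t ^ (2 * (k + 1)) := by
            rw [(c1pe.pow_right (2 * (k + 1))).eq]
        _ = (e ^ 2 * (1 - e * d)) ^ (k + 1) * t ^ (2 * (k + 1)) := by
            rw [idem_shift_pow hp hpe]
    rw [heq]
    calc ‖(e ^ 2 * (1 - e * d)) ^ (k + 1) * t ^ (2 * (k + 1))‖₊
        ≤ ‖(e ^ 2 * (1 - e * d)) ^ (k + 1)‖₊ * ‖t ^ (2 * (k + 1))‖₊ := nnnorm_mul_le _ _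
      _ ≤ ‖(e ^ 2 * (1 - e * d)) ^ (k + 1)‖₊ * ‖t‖₊ ^ (2 * (k + 1)) := by
          gcongr
          exact nnnorm_pow_le' t (by omega)
      _ = 1 * (‖t‖₊ ^ 2) ^ (k + 1) * ‖(e ^ 2 * (1 - e * d)) ^ (k + 1)‖₊ := by
          rw [pow_mul]; ring
  have hqp : e * t = (e * d) * (e * t) := by
    rwa [sub_mul, one_mul, sub_eq_zero] at hz2
  have hpq_eq : e * d = e * t := hpq.trans hqp.symm
  calc d = d * (e * d) := hdp.symm
    _ = d * (e * t) := by rw [hpq_eq]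
    _ = (d * e) * t := by rw [mul_assoc]
    _ = (e * d) * t := by rw [hde]
    _ = (e * t) * t := by rw [hpq_eq]
    _ = t := hqt


end Aux



theorem stmt14 {A : Type*} [NormedRing A] [NormedAlgebra ℂ A] [CompleteSpace A]
    (a b a' b' : A) (hcomm : a * b = b * a)
    (ha : IsGHInverse a a') (hb : IsGHInverse b b') :
    IsGHInverse (a * b) (a' * b') := by
  obtain ⟨ha1, ha2, ha3⟩ := ha
  obtain ⟨hb1, hb2, hb3⟩ := hb
  have swap : ∀ x y z : A, x * y = y * x → x * (y * z) = y * (x * z) := by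
    intro x y z h
    rw [← mul_assoc, h, mul_assoc]
  -- commutation facts
  have cab : Commute a b := hcomm
  have caa' : Commute a' a := ha2 a rfl
  have cbb' : Commute b' b := hb2 b rfl
  have ca'b : Commute a' b := ha2 b hcomm.symm
  have cb'a : Commute b' a := hb2 a hcomm
  have ca'b' : Commute a' b' := ha2 b' cb'a.eq
  -- Goal 1
  have goal1 : (a' * b') * (a * b) * (a' * b') = a' * b' := by
    calc (a' * b') * (a * b) * (a' * b')
        = a' * (b' * (a * (b * (a' * b')))) := by simp only [mul_assoc]
      _ = a' * (a * (b' * (b * (a' * b')))) := by rw [swap b' a _ cb'a.eq]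
      _ = a' * (a * (b' * (a' * (b * b')))) := by rw [swap b a' b' ca'b.symm.eq]
      _ = a' * (a * (a' * (b' * (b * b')))) := by rw [swap b' a' _ ca'b'.symm.eq]
      _ = (a' * a * a') * (b' * b * b') := by simp only [mul_assoc]
      _ = a' * b' := by rw [ha1, hb1]
  -- key decomposition for Goal 3
  have c_a_bb' : Commute a (b * b') := cab.mul_right cb'a.symm
  have hb2a2 : b ^ 2 * a ^ 2 = (a * b) ^ 2 := by
    rw [cab.mul_pow]
    exact (cab.pow_pow 2 2).eq.symm
  have maa' : (a * b) * (a' * b') = (a * a') * (b * b') := by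
    calc (a * b) * (a' * b') = a * (b * (a' * b')) := by rw [mul_assoc]
      _ = a * (a' * (b * b')) := by rw [swap b a' b' ca'b.symm.eq]
      _ = (a * a') * (b * b') := by rw [← mul_assoc]
  have key : (a * b) ^ 2 - (a * b) * (a' * b')
      = (b ^ 2 - b * b') * a ^ 2 + (a ^ 2 - a * a') * (b * b') := by
    rw [sub_mul, sub_mul, hb2a2, (c_a_bb'.pow_left 2).eq, ← maa']
    abel
  -- quasinilpotency (spectral radius form)
  have hX : spectralRadius ℂ ((b ^ 2 - b * b') * a ^ 2) = 0 := by
    refine sr0_mul hb3.sr0 ?_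
    exact (((cab.symm.pow_pow 2 2)).sub_left ((c_a_bb'.symm).pow_right 2)).eq
  have hY : spectralRadius ℂ ((a ^ 2 - a * a') * (b * b')) = 0 := by
    refine sr0_mul ha3.sr0 ?_
    have c1 : Commute (a ^ 2) (b * b') := c_a_bb'.pow_left 2
    have c2 : Commute (a * a') (b * b') :=
      (cab.mul_right cb'a.symm).mul_left (ca'b.mul_right ca'b')
    exact (c1.sub_left c2).eq
  have hXY : Commute ((b ^ 2 - b * b') * a ^ 2) ((a ^ 2 - a * a') * (b * b')) := by
    have cb2 : Commute (b ^ 2 - b * b') (a ^ 2 - a * a') := by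
      refine Commute.sub_left ?_ ?_
      · exact Commute.sub_right ((cab.symm.pow_pow 2 2)) ((cab.symm.pow_left 2).mul_right (ca'b.symm.pow_left 2))
      · refine Commute.sub_right ?_ ?_
        · exact (c_a_bb'.symm).pow_right 2
        · exact (cab.symm.mul_left cb'a).mul_right (ca'b.symm.mul_left ca'b'.symm)
    have cb3 : Commute (b ^ 2 - b * b') (b * b') := by
      refine Commute.sub_left ?_ ?_
      · exact ((Commute.refl b).mul_right cbb'.symm).pow_left 2
      · exact Commute.refl _
    have ca2 : Commute (a ^ 2) (a ^ 2 - a * a') := by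
      refine Commute.sub_right (Commute.refl _) ?_
      exact ((Commute.refl a).mul_right caa'.symm).pow_left 2
    have ca3 : Commute (a ^ 2) (b * b') := c_a_bb'.pow_left 2
    exact (cb2.mul_right cb3).mul_left ((ca2.mul_right ca3 : Commute _ _))
  have hsr3 : spectralRadius ℂ ((a * b) ^ 2 - (a * b) * (a' * b')) = 0 := by
    rw [key]
    exact sr0_add hX hY hXY.eq
  have goal3 : IsQuasinilpotent ((a * b) ^ 2 - (a * b) * (a' * b')) :=
    isQuasinilpotent_of_sr0 hsr3
  -- Goal 2 : double commutant via uniqueness and conjugation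
  have cd_e : Commute (a' * b') (a * b) :=
    Commute.mul_left (caa'.mul_right ca'b) (cb'a.mul_right cbb')
  have goal2 : InDoubleCommutant (a * b) (a' * b') := by
    intro y hy
    have hpos : (0:ℝ) < 2 * (‖y‖ + 1) := by positivity
    set γ : ℂ := (((2 * (‖y‖ + 1))⁻¹ : ℝ) : ℂ) with hγdef
    have hγ : γ ≠ 0 := by
      rw [hγdef]
      exact_mod_cast inv_ne_zero (ne_of_gt hpos)
    have hlt : ‖γ • y‖ < 1 := by
      rw [norm_smul, hγdef, Complex.norm_real, Real.norm_eq_abs,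
        abs_of_nonneg (by positivity), inv_mul_lt_one₀ hpos]
      linarith [norm_nonneg y]
    set u : Aˣ := Units.oneSub (γ • y) hlt with hu_def
    have hu_val : (u : A) = 1 - γ • y := rfl
    have hcue : Commute (u : A) (a * b) := by
      show (u : A) * (a * b) = (a * b) * (u : A)
      rw [hu_val]
      simp only [sub_mul, mul_sub, one_mul, mul_one, smul_mul_assoc, mul_smul_comm, hy]
    have hcue_inv : Commute ((u⁻¹ : Aˣ) : A) (a * b) := hcue.units_inv_left
    -- the conjugated candidate
    set t : A := (u : A) * (a' * b') * ((u⁻¹ : Aˣ) : A) with ht_def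
    have hte : t * (a * b) = (a * b) * t := by
      calc t * (a * b) = (u : A) * (a' * b') * (((u⁻¹ : Aˣ) : A) * (a * b)) := by
            rw [ht_def, mul_assoc]
        _ = (u : A) * (a' * b') * ((a * b) * ((u⁻¹ : Aˣ) : A)) := by rw [hcue_inv.eq]
        _ = (u : A) * ((a' * b') * (a * b)) * ((u⁻¹ : Aˣ) : A) := by
            simp only [mul_assoc]
        _ = (u : A) * ((a * b) * (a' * b')) * ((u⁻¹ : Aˣ) : A) := by rw [cd_e.eq]
        _ = ((u : A) * (a * b)) * ((a' * b') * ((u⁻¹ : Aˣ) : A)) := by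
            simp only [mul_assoc]
        _ = ((a * b) * (u : A)) * ((a' * b') * ((u⁻¹ : Aˣ) : A)) := by rw [hcue.eq]
        _ = (a * b) * t := by rw [ht_def]; simp only [mul_assoc]
    have hmid : ∀ w : A, (u : A) * w * ((u⁻¹ : Aˣ) : A) * (a * b) = (u : A) * (w * (a * b)) * ((u⁻¹ : Aˣ) : A) := by
      intro w
      calc (u : A) * w * ((u⁻¹ : Aˣ) : A) * (a * b)
          = (u : A) * w * (((u⁻¹ : Aˣ) : A) * (a * b)) := by rw [mul_assoc]
        _ = (u : A) * w * ((a * b) * ((u⁻¹ : Aˣ) : A)) := by rw [hcue_inv.eq]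
        _ = (u : A) * (w * (a * b)) * ((u⁻¹ : Aˣ) : A) := by simp only [mul_assoc]
    have ht2 : t * (a * b) * t = t := by
      calc t * (a * b) * t
          = (u : A) * ((a' * b') * (a * b)) * ((u⁻¹ : Aˣ) : A) * t := by
            rw [ht_def, hmid]
        _ = (u : A) * ((a' * b') * (a * b)) * (((u⁻¹ : Aˣ) : A) * ((u : A) * ((a' * b') * ((u⁻¹ : Aˣ) : A)))) := by
            rw [ht_def]; simp only [mul_assoc]
        _ = (u : A) * ((a' * b') * (a * b)) * ((a' * b') * ((u⁻¹ : Aˣ) : A)) := by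
            rw [← mul_assoc ((u⁻¹ : Aˣ) : A), Units.inv_mul, one_mul]
        _ = (u : A) * ((a' * b') * (a * b) * (a' * b')) * ((u⁻¹ : Aˣ) : A) := by
            simp only [mul_assoc]
        _ = t := by rw [goal1, ht_def]
    have htq : spectralRadius ℂ ((a * b) ^ 2 - (a * b) * t) = 0 := by
      have hconj : (a * b) ^ 2 - (a * b) * t
          = (u : A) * ((a * b) ^ 2 - (a * b) * (a' * b')) * ((u⁻¹ : Aˣ) : A) := by
        rw [mul_sub, sub_mul]
        congr 1
        · rw [(hcue.pow_right 2).eq, mul_assoc, Units.mul_inv, mul_one]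
        · calc (a * b) * t = ((a * b) * (u : A)) * ((a' * b') * ((u⁻¹ : Aˣ) : A)) := by
                rw [ht_def]; simp only [mul_assoc]
            _ = ((u : A) * (a * b)) * ((a' * b') * ((u⁻¹ : Aˣ) : A)) := by rw [hcue.eq]
            _ = (u : A) * ((a * b) * (a' * b')) * ((u⁻¹ : Aˣ) : A) := by
                simp only [mul_assoc]
      rw [hconj]
      have hspec : spectrum ℂ ((u : A) * ((a * b) ^ 2 - (a * b) * (a' * b')) * ((u⁻¹ : Aˣ) : A))
          = spectrum ℂ ((a * b) ^ 2 - (a * b) * (a' * b')) := spectrum.units_conjugate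
      have : spectralRadius ℂ ((u : A) * ((a * b) ^ 2 - (a * b) * (a' * b')) * ((u⁻¹ : Aˣ) : A))
          = spectralRadius ℂ ((a * b) ^ 2 - (a * b) * (a' * b')) := by
        simp only [spectralRadius, hspec]
      rw [this]
      exact hsr3
    have hdt : a' * b' = t := gh_unique cd_e.eq goal1 hsr3 hte ht2 htq
    -- from a' * b' = u * (a'*b') * u⁻¹ we get commutation with u, hence with y
    have hcu : (a' * b') * (u : A) = (u : A) * (a' * b') := by
      calc (a' * b') * (u : A) = ((u : A) * (a' * b') * ((u⁻¹ : Aˣ) : A)) * (u : A) := by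
            rw [← ht_def, ← hdt]
        _ = (u : A) * (a' * b') := Units.inv_mul_cancel_right _ _
    rw [hu_val] at hcu
    have hsmul : (a' * b') * (γ • y) = (γ • y) * (a' * b') := by
      have h1 := hcu
      simp only [mul_sub, sub_mul, mul_one, one_mul] at h1
      exact (sub_right_inj.mp h1)
    have h2 : γ • ((a' * b') * y) = γ • (y * (a' * b')) := by
      rwa [mul_smul_comm, smul_mul_assoc] at hsmul
    have h3 := congrArg (fun w => γ⁻¹ • w) h2
    simpa [smul_smul, inv_mul_cancel₀ hγ] using h3
  exact ⟨goal1, goal2, goal3⟩
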